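/- Let e, μ be nonzero complex numbers and let L be the difference operator (Lψ)_i = ψ_{i-k-1} + Σ_{j=1}^{k} a_i^j ψ_{i-j}, where the coefficients satisfy a_{i+n}^j = a_i^j. Suppose every solution Ψ of (L - e)Ψ = 0 satisfies μΨ_i = Ψ_{i-n} for all i. Then μ^{k+1} = (-1)^{kn} e^n. -/

import Mathlib

noncomputable def sol (k : ℕ) (e : ℂ) (a : ℤ → ℕ → ℂ) (v : ℤ → ℂ) (i : ℤ) : ℂ :=
  if h1 : i < 0 then
    e * sol k e a v (i + (k+1)) -
      ∑ j ∈ (Finset.Icc 1 k).attach, a (i + (k+1)) j.1 * sol k e a v (i + (k+1) - j.1)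
  else if h2 : i ≤ k then v i
  else (sol k e a v (i - (k+1)) +
      ∑ j ∈ (Finset.Icc 1 k).attach, a i j.1 * sol k e a v (i - j.1)) / e
termination_by ((i - k).toNat + (-i).toNat)
decreasing_by
  all_goals simp_wf
  · omega
  · have := Finset.mem_Icc.mp j.2; omega
  · omega
  · have := Finset.mem_Icc.mp j.2; omega

lemma sol_init (k : ℕ) (e : ℂ) (a : ℤ → ℕ → ℂ) (v : ℤ → ℂ) (l : ℤ)
    (h0 : 0 ≤ l) (hk : l ≤ k) : sol k e a v l = v l := by
  rw [sol, dif_neg (by omega), dif_pos hk]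

lemma sol_rec (k : ℕ) (e : ℂ) (he : e ≠ 0) (a : ℤ → ℕ → ℂ) (v : ℤ → ℂ) (i : ℤ) :
    sol k e a v (i - (k + 1)) + ∑ j ∈ Finset.Icc 1 k, a i j * sol k e a v (i - j)
      = e * sol k e a v i := by
  rcases lt_or_ge (k:ℤ) i with hi | hi
  · conv_rhs => rw [sol]
    rw [dif_neg (by omega), dif_neg (by omega),
      Finset.sum_attach (Finset.Icc 1 k) (fun j => a i j * sol k e a v (i - j))]
    field_simp
  · have h1 : i - (k+1) < 0 := by omega
    conv_lhs => rw [sol]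
    rw [dif_pos h1]
    rw [show i - (k+1) + (k+1) = i by ring]
    rw [Finset.sum_attach (Finset.Icc 1 k) (fun j => a i j * sol k e a v (i - j))]
    ring

/-- the `m`-th basic solution -/
noncomputable def bas (k : ℕ) (e : ℂ) (a : ℤ → ℕ → ℂ) (m : Fin (k+1)) : ℤ → ℂ :=
  sol k e a (fun x => if x = (k : ℤ) - (m : ℕ) then 1 else 0)

/-- the fundamental matrix at window `i` -/
noncomputable def solM (k : ℕ) (e : ℂ) (a : ℤ → ℕ → ℂ) (i : ℤ) :
    Matrix (Fin (k+1)) (Fin (k+1)) ℂ :=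
  Matrix.of fun l m => bas k e a m (i - l)

/-- the one-step backward companion matrix -/
def Amat (k : ℕ) (e : ℂ) (a : ℤ → ℕ → ℂ) (i : ℤ) : Matrix (Fin (k+1)) (Fin (k+1)) ℂ :=
  Matrix.of fun l l' =>
    if (l : ℕ) < k then (if (l' : ℕ) = (l : ℕ) + 1 then 1 else 0)
    else if l' = 0 then e else - a i (l' : ℕ)

lemma solM_init (k : ℕ) (e : ℂ) (a : ℤ → ℕ → ℂ) : solM k e a (k : ℤ) = 1 := by
  ext l m
  simp only [solM, Matrix.of_apply, bas]
  rw [sol_init k e a _ _ (by omega) (by omega)]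
  have : ((k : ℤ) - l = (k : ℤ) - (m : ℕ)) ↔ l = m := by
    constructor
    · intro h; ext; omega
    · intro h; rw [h]
  rw [Matrix.one_apply]
  simp only [this]

lemma Amat_det (k : ℕ) (e : ℂ) (a : ℤ → ℕ → ℂ) (i : ℤ) :
    (Amat k e a i).det = (-1 : ℂ) ^ k * e := by
  rw [Matrix.det_succ_column_zero]
  rw [Finset.sum_eq_single (Fin.last k)]
  · have h1 : Amat k e a i (Fin.last k) 0 = e := by
      simp [Amat, Fin.last]
    rw [h1]
    have h2 : ((Amat k e a i).submatrix (Fin.last k).succAbove Fin.succ) = 1 := by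
      ext l l'
      rw [Matrix.submatrix_apply, Fin.succAbove_last, Matrix.one_apply]
      have hc : ((l.castSucc : Fin (k+1)) : ℕ) < k := l.isLt
      simp only [Amat, Matrix.of_apply, hc, if_pos]
      have : ((l'.succ : Fin (k+1)) : ℕ) = (l.castSucc : ℕ) + 1 ↔ l' = l := by
        simp only [Fin.val_succ, Fin.coe_castSucc]
        constructor
        · intro h; ext; omega
        · intro h; rw [h]
      by_cases h : l' = l
      · subst h; simp [this]
      · simp [this, h, Ne.symm h]
        exact fun hv => h (Fin.ext hv)
    rw [h2, Matrix.det_one, Fin.val_last]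
    ring
  · intro l _ hl
    have hlk : (l : ℕ) < k := by
      have := l.isLt
      rcases Nat.lt_or_ge (l : ℕ) k with h | h
      · exact h
      · exfalso; exact hl (by ext; simp [Fin.last]; omega)
    have : Amat k e a i l 0 = 0 := by
      simp only [Amat, Matrix.of_apply, if_pos hlk]
      rw [if_neg]
      simp
    rw [this]; ring
  · intro h; exact absurd (Finset.mem_univ _) h

lemma sum_Icc_shift {M : Type*} [AddCommGroup M] (k : ℕ) (g : ℕ → M) :
    ∑ j ∈ Finset.Icc 1 k, g j = ∑ j ∈ Finset.range k, g (j+1) := by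
  have h : Finset.range (k+1) = insert 0 (Finset.Icc 1 k) := by
    ext x
    simp only [Finset.mem_range, Finset.mem_insert, Finset.mem_Icc]
    omega
  have h2 := Finset.sum_range_succ' g k
  rw [h, Finset.sum_insert (by simp)] at h2
  rw [add_comm (g 0)] at h2
  exact add_right_cancel h2

lemma solM_step (k : ℕ) (e : ℂ) (he : e ≠ 0) (a : ℤ → ℕ → ℂ) (i : ℤ) :
    solM k e a (i - 1) = Amat k e a i * solM k e a i := by
  ext l m
  rw [Matrix.mul_apply]
  by_cases hl : (l : ℕ) < k
  · have key : ∀ l' : Fin (k+1),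
        Amat k e a i l l' * solM k e a i l' m
          = if l' = (⟨(l:ℕ)+1, by omega⟩ : Fin (k+1)) then solM k e a i l' m else 0 := by
      intro l'
      simp only [Amat, Matrix.of_apply, if_pos hl]
      by_cases h : l' = (⟨(l:ℕ)+1, by omega⟩ : Fin (k+1))
      · rw [if_pos h, if_pos (by rw [h]), one_mul]
      · rw [if_neg h, if_neg (fun hv => h (Fin.ext hv)), zero_mul]
    rw [Finset.sum_congr rfl (fun l' _ => key l'),
      Finset.sum_ite_eq' Finset.univ, if_pos (Finset.mem_univ _)]
    show bas k e a m (i - 1 - l) = bas k e a m _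
    congr 1
    push_cast
    ring
  · have hlk : (l : ℕ) = k := by have := l.isLt; omega
    have hA : ∀ l' : Fin (k+1), Amat k e a i l l'
        = if l' = 0 then e else - a i (l' : ℕ) := by
      intro l'; simp only [Amat, Matrix.of_apply, if_neg (by omega : ¬ (l:ℕ) < k)]
    simp only [hA, solM, Matrix.of_apply]
    rw [Fin.sum_univ_succ]
    simp only [eq_self_iff_true, if_true, if_neg (Fin.succ_ne_zero _), Fin.val_succ,
      Fin.val_zero, Nat.cast_zero, sub_zero]
    have hls : bas k e a m (i - 1 - l) = bas k e a m (i - (k + 1)) := by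
      congr 1; omega
    rw [hls, show bas k e a m (i - (k+1)) = sol k e a _ (i - (k+1)) from rfl]
    have hrec := sol_rec k e he a
      (fun x => if x = (k : ℤ) - (m : ℕ) then 1 else 0) i
    have hrec' : sol k e a (fun x => if x = (k : ℤ) - (m : ℕ) then 1 else 0) (i - (k+1))
        = e * bas k e a m i
          - ∑ j ∈ Finset.Icc 1 k, a i j * bas k e a m (i - j) := by
      rw [eq_sub_iff_add_eq]; exact hrec
    rw [hrec']
    have hsum : ∑ x : Fin k, -a i ((x : ℕ) + 1) * bas k e a m (i - ((x : ℕ) + 1 : ℕ))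
        = - ∑ j ∈ Finset.Icc 1 k, a i j * bas k e a m (i - j) := by
      rw [Fin.sum_univ_eq_sum_range
        (fun j => -a i (j + 1) * bas k e a m (i - ((j + 1 : ℕ) : ℤ)))]
      rw [sum_Icc_shift k (fun j => a i j * bas k e a m (i - j)),
        ← Finset.sum_neg_distrib]
      refine Finset.sum_congr rfl (fun j _ => ?_)
      ring
    rw [hsum]
    ring

/-- If all solutions of `(L - e)Ψ = 0` for the monic strictly lower triangular `n`-periodic
difference operator `L = T^{-k-1} + ∑_{j=1}^k a_i^j T^{-j}` have the same monodromy
multiplier `μ` (i.e. `μ Ψ_i = Ψ_{i-n}`), then `μ^{k+1} = (-1)^{kn} e^n`. -/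
theorem admissible_pair_relation (n k : ℕ) (hn : 1 ≤ n)
    (e μ : ℂ) (he : e ≠ 0) (hμ : μ ≠ 0)
    (a : ℤ → ℕ → ℂ) (hper : ∀ i j, a (i + n) j = a i j)
    (hsuper : ∀ Ψ : ℤ → ℂ,
      (∀ i : ℤ, Ψ (i - (k + 1)) + ∑ j ∈ Finset.Icc 1 k, a i j * Ψ (i - j) = e * Ψ i) →
      (∀ i : ℤ, μ * Ψ i = Ψ (i - n))) :
    μ ^ (k + 1) = (-1 : ℂ) ^ (k * n) * e ^ n := by
  have hmono : ∀ m : Fin (k+1), ∀ i : ℤ, μ * bas k e a m i = bas k e a m (i - n) :=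
    fun m => hsuper (bas k e a m) (fun i => sol_rec k e he a _ i)
  have hmonoM : ∀ i : ℤ, solM k e a (i - n) = μ • solM k e a i := by
    intro i; ext l m
    simp only [solM, Matrix.of_apply, Matrix.smul_apply, smul_eq_mul]
    rw [hmono m (i - l)]
    congr 1; ring
  have hstepdet : ∀ i : ℤ, (solM k e a (i - 1)).det
      = ((-1:ℂ)^k * e) * (solM k e a i).det := by
    intro i
    rw [solM_step k e he a i, Matrix.det_mul, Amat_det]
  have hiter : ∀ t : ℕ, (solM k e a ((k:ℤ) - t)).det = ((-1:ℂ)^k * e)^t := by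
    intro t; induction t with
    | zero => simp [solM_init]
    | succ t ih =>
      have h : (k:ℤ) - (t+1 : ℕ) = ((k:ℤ) - t) - 1 := by push_cast; ring
      rw [h, hstepdet, ih]; ring
  have h1 : (solM k e a ((k:ℤ) - n)).det = μ ^ (k+1) := by
    rw [hmonoM (k:ℤ), Matrix.det_smul, solM_init, Matrix.det_one, mul_one]
    simp [Fintype.card_fin]
  have h2 := hiter n
  rw [h1] at h2
  rw [h2, mul_pow, ← pow_mul]
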